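/- Let $Z_1, \ldots, Z_{n+m}$ take values in a finite set $\{0, \ldots, J\}$ with category counts $\mathrm{tot}_j = \#\{i : Z_i = j\}$, and let $r_0, \ldots, r_J > 0$. For $\sigma$ drawn from the distribution on $\mathcal{S}_{n+m}$ proportional to $\prod_{i=n+1}^{n+m} r_{Z_{\sigma(i)}}$, define $N^\sigma_j = \#\{i \in \{n+1,\ldots,n+m\} : Z_{\sigma(i)} = j\}$. Then for every vector $w = (w_0, \ldots, w_J)$ with $\sum_j w_j = m$ and $\max(0, \mathrm{tot}_j - n) \leq w_j \leq \min(m, \mathrm{tot}_j)$ for all $j$, the number of permutations $\sigma$ with $(N^\sigma_0, \ldots, N^\sigma_J) = w$ equals $n!\, m! \prod_{j=0}^{J} \binom{\mathrm{tot}_j}{w_j}$, and consequently $\mathbb{P}\{(N^\sigma_0, \ldots, N^\sigma_J) = w\} \propto \prod_{j=0}^{J} r_j^{w_j} \binom{\mathrm{tot}_j}{w_j}$ (Fisher's multivariate noncentral hypergeometric distribution). -/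

import Mathlib

open Finset

/-- Number of data points (out of `Z`) in category `j`. -/
def catTot (n m J : ℕ) (Z : Fin (n + m) → Fin (J + 1)) (j : Fin (J + 1)) : ℕ :=
  (Finset.univ.filter (fun i => Z i = j)).card

/-- Number of the last `m` permuted data points in category `j`. -/
def catCount (n m J : ℕ) (Z : Fin (n + m) → Fin (J + 1))
    (σ : Equiv.Perm (Fin (n + m))) (j : Fin (J + 1)) : ℕ :=
  (Finset.univ.filter (fun i : Fin (n + m) => n ≤ (i : ℕ) ∧ Z (σ i) = j)).card

/-- The unnormalized sampling weight `∏_{i > n} r_{Z_{σ(i)}}` of a permutation. -/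
def permWeight (n m J : ℕ) (Z : Fin (n + m) → Fin (J + 1)) (r : Fin (J + 1) → ℝ)
    (σ : Equiv.Perm (Fin (n + m))) : ℝ :=
  ∏ i ∈ Finset.univ.filter (fun i : Fin (n + m) => n ≤ (i : ℕ)), r (Z (σ i))

/-- Combining equivalence: perms sending `p` to `q` ≃ pairs of bijections. -/
def splitPermEquiv {α : Type*} [DecidableEq α] (p q : α → Prop) [DecidablePred p] [DecidablePred q] :
    ({x // p x} ≃ {x // q x}) × ({x // ¬ p x} ≃ {x // ¬ q x}) ≃
      {σ : Equiv.Perm α // ∀ x, p x ↔ q (σ x)} where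
  toFun ef := ⟨(Equiv.sumCompl p).symm.trans ((ef.1.sumCongr ef.2).trans (Equiv.sumCompl q)), by
    intro x
    by_cases h : p x
    · simp [Equiv.sumCompl_symm_apply_of_pos (p := p) h, h, (ef.1 ⟨x, h⟩).2]
    · simp [Equiv.sumCompl_symm_apply_of_neg (p := p) h, h, (ef.2 ⟨x, h⟩).2]⟩
  invFun σ := ⟨σ.1.subtypeEquiv σ.2, σ.1.subtypeEquiv (fun a => not_congr (σ.2 a))⟩
  left_inv := by
    rintro ⟨e, f⟩
    ext x
    · simp [Equiv.sumCompl_symm_apply_of_pos (p := p) x.2]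
    · simp [Equiv.sumCompl_symm_apply_of_neg (p := p) x.2]
  right_inv := by
    rintro ⟨σ, hσ⟩
    ext x
    by_cases h : p x
    · simp [Equiv.sumCompl_symm_apply_of_pos (p := p) h]
    · simp [Equiv.sumCompl_symm_apply_of_neg (p := p) h]

lemma image_eq_iff {α : Type*} [Fintype α] [DecidableEq α] (s t : Finset α)
    (σ : Equiv.Perm α) : s.image σ = t ↔ ∀ x, x ∈ s ↔ σ x ∈ t := by
  constructor
  · rintro rfl x
    constructor
    · exact fun h => Finset.mem_image_of_mem σ h
    · intro h
      obtain ⟨y, hy, hxy⟩ := Finset.mem_image.1 h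
      rwa [← σ.injective hxy]
  · intro h
    ext y
    constructor
    · intro hy
      obtain ⟨x, hx, rfl⟩ := Finset.mem_image.1 hy
      exact (h x).1 hx
    · intro hy
      refine Finset.mem_image.2 ⟨σ.symm y, ?_, σ.apply_symm_apply y⟩
      rw [h (σ.symm y), σ.apply_symm_apply]
      exact hy

lemma card_perm_image {α : Type*} [Fintype α] [DecidableEq α] (s t : Finset α)
    (h : s.card = t.card) :
    (Finset.univ.filter (fun σ : Equiv.Perm α => s.image σ = t)).card
      = s.card.factorial * (Fintype.card α - s.card).factorial := by
  classical
  have h1 : (Finset.univ.filter (fun σ : Equiv.Perm α => s.image σ = t)).card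
      = Fintype.card {σ : Equiv.Perm α // ∀ x, x ∈ s ↔ σ x ∈ t} := by
    rw [Fintype.card_subtype]
    apply Finset.card_bij (fun σ _ => σ) <;> simp [image_eq_iff]
  rw [h1, ← Fintype.card_congr (splitPermEquiv (fun x => x ∈ s) (fun x => x ∈ t))]
  rw [Fintype.card_prod]
  have e1 : {x // x ∈ s} ≃ {x // x ∈ t} := Finset.equivOfCardEq h
  have e2 : {x // ¬ x ∈ s} ≃ {x // ¬ x ∈ t} := by
    apply Fintype.equivOfCardEq
    rw [Fintype.card_subtype_compl, Fintype.card_subtype_compl,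
      Fintype.card_coe, Fintype.card_coe, h]
  rw [Fintype.card_equiv e1, Fintype.card_equiv e2, Fintype.card_coe,
    Fintype.card_subtype_compl, Fintype.card_coe]

lemma card_goodsets {α β : Type*} [Fintype α] [Fintype β] [DecidableEq α] [DecidableEq β]
    (Z : α → β) (w : β → ℕ) :
    (Finset.univ.filter
        (fun S : Finset α => ∀ j, (S.filter (fun x => Z x = j)).card = w j)).card
      = ∏ j, ((Finset.univ.filter (fun x => Z x = j)).card).choose (w j) := by
  classical
  have hcard : (Fintype.piFinset
      (fun j : β => (Finset.univ.filter (fun x => Z x = j)).powersetCard (w j))).card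
      = ∏ j, ((Finset.univ.filter (fun x => Z x = j)).card).choose (w j) := by
    rw [Fintype.card_piFinset]
    exact Finset.prod_congr rfl fun j _ => Finset.card_powersetCard _ _
  rw [← hcard]
  apply Finset.card_bij' (i := fun S _ => fun j => S.filter (fun x => Z x = j))
    (j := fun A _ => Finset.univ.biUnion A)
  · intro S hS
    rw [Finset.mem_filter] at hS
    rw [Fintype.mem_piFinset]
    intro j
    rw [Finset.mem_powersetCard]
    refine ⟨fun x hx => ?_, hS.2 j⟩
    rw [Finset.mem_filter] at hx ⊢
    exact ⟨Finset.mem_univ x, hx.2⟩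
  · intro A hA
    rw [Fintype.mem_piFinset] at hA
    rw [Finset.mem_filter]
    refine ⟨Finset.mem_univ _, fun j => ?_⟩
    have : (Finset.univ.biUnion A).filter (fun x => Z x = j) = A j := by
      ext x
      simp only [Finset.mem_filter, Finset.mem_biUnion, Finset.mem_univ, true_and]
      constructor
      · rintro ⟨⟨j', hj'⟩, hZ⟩
        have := (Finset.mem_powersetCard.1 (hA j')).1 hj'
        rw [Finset.mem_filter] at this
        rw [← hZ, this.2]; exact hj'
      · intro hx
        refine ⟨⟨j, hx⟩, ?_⟩
        have := (Finset.mem_powersetCard.1 (hA j)).1 hx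
        rw [Finset.mem_filter] at this
        exact this.2
    rw [this]
    exact (Finset.mem_powersetCard.1 (hA j)).2
  · intro S hS
    ext x
    simp only [Finset.mem_biUnion, Finset.mem_univ, true_and, Finset.mem_filter]
    exact ⟨fun ⟨j, hj, _⟩ => hj, fun hx => ⟨Z x, hx, rfl⟩⟩
  · intro A hA
    rw [Fintype.mem_piFinset] at hA
    funext j
    ext x
    simp only [Finset.mem_filter, Finset.mem_biUnion, Finset.mem_univ, true_and]
    constructor
    · rintro ⟨⟨j', hj'⟩, hZ⟩
      have := (Finset.mem_powersetCard.1 (hA j')).1 hj'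
      rw [Finset.mem_filter] at this
      rw [← hZ, this.2]; exact hj'
    · intro hx
      refine ⟨⟨j, hx⟩, ?_⟩
      have := (Finset.mem_powersetCard.1 (hA j)).1 hx
      rw [Finset.mem_filter] at this
      exact this.2

lemma cardT (n m : ℕ) :
    (Finset.univ.filter (fun i : Fin (n + m) => n ≤ (i : ℕ))).card = m := by
  have : Finset.univ.filter (fun i : Fin (n + m) => n ≤ (i : ℕ))
      = Finset.univ.image (Fin.natAdd n : Fin m → Fin (n + m)) := by
    ext i
    simp only [Finset.mem_filter, Finset.mem_univ, true_and, Finset.mem_image]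
    constructor
    · intro hi
      exact ⟨⟨(i : ℕ) - n, by omega⟩,
        Fin.ext (show n + ((i : ℕ) - n) = (i : ℕ) by omega)⟩
    · rintro ⟨k, rfl⟩
      show n ≤ n + (k : ℕ)
      omega
  have hinj : Function.Injective (Fin.natAdd n : Fin m → Fin (n + m)) := by
    intro a b hab
    have := congrArg Fin.val hab
    simp only [Fin.coe_natAdd] at this
    exact Fin.ext (by omega)
  rw [this, Finset.card_image_of_injective _ hinj,
    Finset.card_univ, Fintype.card_fin]

lemma catCount_eq (n m J : ℕ) (Z : Fin (n + m) → Fin (J + 1))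
    (σ : Equiv.Perm (Fin (n + m))) (j : Fin (J + 1)) :
    catCount n m J Z σ j
      = (((Finset.univ.filter (fun i : Fin (n + m) => n ≤ (i : ℕ))).image σ).filter
          (fun x => Z x = j)).card := by
  classical
  have himg : ((Finset.univ.filter
        (fun i : Fin (n + m) => n ≤ (i : ℕ) ∧ Z (σ i) = j)).image σ)
      = ((Finset.univ.filter (fun i : Fin (n + m) => n ≤ (i : ℕ))).image σ).filter
          (fun x => Z x = j) := by
    ext y
    simp only [Finset.mem_image, Finset.mem_filter, Finset.mem_univ, true_and]
    constructor
    · rintro ⟨x, ⟨hx, hZ⟩, rfl⟩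
      exact ⟨⟨x, hx, rfl⟩, hZ⟩
    · rintro ⟨⟨x, hx, rfl⟩, hZ⟩
      exact ⟨x, ⟨hx, hZ⟩, rfl⟩
  rw [← himg, Finset.card_image_of_injective _ σ.injective]
  rfl

lemma permWeight_eq (n m J : ℕ) (Z : Fin (n + m) → Fin (J + 1)) (r : Fin (J + 1) → ℝ)
    (σ : Equiv.Perm (Fin (n + m))) :
    permWeight n m J Z r σ = ∏ j, r j ^ catCount n m J Z σ j := by
  classical
  unfold permWeight
  rw [← Finset.prod_fiberwise_of_maps_to (g := fun i => Z (σ i)) (t := Finset.univ)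
    (fun x _ => Finset.mem_univ _) (fun i => r (Z (σ i)))]
  refine Finset.prod_congr rfl fun j _ => ?_
  have h1 : ((Finset.univ.filter (fun i : Fin (n + m) => n ≤ (i : ℕ))).filter
      (fun i => Z (σ i) = j))
      = Finset.univ.filter (fun i : Fin (n + m) => n ≤ (i : ℕ) ∧ Z (σ i) = j) := by
    rw [Finset.filter_filter]
  calc (∏ i ∈ (Finset.univ.filter (fun i : Fin (n + m) => n ≤ (i : ℕ))).filter
        (fun i => Z (σ i) = j), r (Z (σ i)))
      = ∏ i ∈ (Finset.univ.filter (fun i : Fin (n + m) => n ≤ (i : ℕ))).filter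
        (fun i => Z (σ i) = j), r j := by
        refine Finset.prod_congr rfl fun i hi => ?_
        rw [Finset.mem_filter] at hi
        rw [hi.2]
    _ = r j ^ catCount n m J Z σ j := by
        rw [Finset.prod_const, h1]
        rfl

theorem stmt8 (n m J : ℕ) (hn : 0 < n) (hm : 0 < m) (hJ : 1 ≤ J)
    (Z : Fin (n + m) → Fin (J + 1)) (r : Fin (J + 1) → ℝ) (hr : ∀ j, 0 < r j) :
    ∃ c : ℝ, 0 < c ∧
      ∀ w : Fin (J + 1) → ℕ,
        (∑ j, w j = m) →
        (∀ j, catTot n m J Z j - n ≤ w j ∧ w j ≤ min m (catTot n m J Z j)) →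
        ((Finset.univ.filter
            (fun σ : Equiv.Perm (Fin (n + m)) => ∀ j, catCount n m J Z σ j = w j)).card
          = n.factorial * m.factorial * ∏ j, (catTot n m J Z j).choose (w j)) ∧
        ((∑ σ ∈ Finset.univ.filter
              (fun σ : Equiv.Perm (Fin (n + m)) => ∀ j, catCount n m J Z σ j = w j),
            permWeight n m J Z r σ)
          / (∑ σ : Equiv.Perm (Fin (n + m)), permWeight n m J Z r σ)
          = c * ∏ j, r j ^ (w j) * ((catTot n m J Z j).choose (w j) : ℝ)) := by
  classical
  set T : Finset (Fin (n + m)) := Finset.univ.filter (fun i : Fin (n + m) => n ≤ (i : ℕ))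
    with hT
  set D : ℝ := ∑ σ : Equiv.Perm (Fin (n + m)), permWeight n m J Z r σ with hD
  have hDpos : 0 < D := by
    apply Finset.sum_pos
    · intro σ _
      exact Finset.prod_pos fun i _ => hr _
    · exact Finset.univ_nonempty
  refine ⟨(n.factorial * m.factorial : ℝ) / D, by positivity, ?_⟩
  intro w hsum _
  -- the counting identity
  have hcount : (Finset.univ.filter
      (fun σ : Equiv.Perm (Fin (n + m)) => ∀ j, catCount n m J Z σ j = w j)).card
      = n.factorial * m.factorial * ∏ j, (catTot n m J Z j).choose (w j) := by
    have hpred : ∀ σ : Equiv.Perm (Fin (n + m)),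
        (∀ j, catCount n m J Z σ j = w j)
          ↔ (∀ j, ((T.image (⇑σ)).filter (fun x => Z x = j)).card = w j) := by
      intro σ
      constructor <;> intro h j <;> have := h j
      · rwa [catCount_eq] at this
      · rwa [catCount_eq]
    have hfib : (Finset.univ.filter
        (fun σ : Equiv.Perm (Fin (n + m)) => ∀ j, catCount n m J Z σ j = w j)).card
        = ∑ S ∈ Finset.univ.filter
            (fun S : Finset (Fin (n + m)) => ∀ j, (S.filter (fun x => Z x = j)).card = w j),
          ((Finset.univ.filter
            (fun σ : Equiv.Perm (Fin (n + m)) => ∀ j, catCount n m J Z σ j = w j)).filter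
              (fun σ : Equiv.Perm (Fin (n + m)) => T.image (⇑σ) = S)).card := by
      apply Finset.card_eq_sum_card_fiberwise
      intro σ hσ
      rw [Finset.mem_coe, Finset.mem_filter] at hσ
      rw [Finset.mem_coe, Finset.mem_filter]
      exact ⟨Finset.mem_univ _, (hpred σ).1 hσ.2⟩
    rw [hfib]
    have hterm : ∀ S ∈ Finset.univ.filter
        (fun S : Finset (Fin (n + m)) => ∀ j, (S.filter (fun x => Z x = j)).card = w j),
        ((Finset.univ.filter
          (fun σ : Equiv.Perm (Fin (n + m)) => ∀ j, catCount n m J Z σ j = w j)).filter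
            (fun σ : Equiv.Perm (Fin (n + m)) => T.image (⇑σ) = S)).card = m.factorial * n.factorial := by
      intro S hS
      rw [Finset.mem_filter] at hS
      have hcardS : S.card = m := by
        have := Finset.card_eq_sum_card_fiberwise (s := S) (t := Finset.univ) (f := Z)
          (fun x _ => Finset.mem_univ _)
        rw [this]
        rw [Finset.sum_congr rfl (fun j _ => hS.2 j)]
        exact hsum
      have heq : (Finset.univ.filter
          (fun σ : Equiv.Perm (Fin (n + m)) => ∀ j, catCount n m J Z σ j = w j)).filter
            (fun σ : Equiv.Perm (Fin (n + m)) => T.image (⇑σ) = S)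
          = Finset.univ.filter (fun σ : Equiv.Perm (Fin (n + m)) => T.image (⇑σ) = S) := by
        rw [Finset.filter_filter]
        apply Finset.filter_congr
        intro σ _
        constructor
        · exact fun h => h.2
        · intro h
          refine ⟨(hpred σ).2 fun j => ?_, h⟩
          rw [h]
          exact hS.2 j
      have hnm : n + m - m = n := by omega
      rw [heq, card_perm_image T S (by rw [cardT, hcardS]), cardT,
        Fintype.card_fin, hnm, Nat.mul_comm]
    rw [Finset.sum_congr rfl hterm, Finset.sum_const, smul_eq_mul]
    have hg : (Finset.univ.filter
        (fun S : Finset (Fin (n + m)) => ∀ j, (S.filter (fun x => Z x = j)).card = w j)).card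
        = ∏ j, (catTot n m J Z j).choose (w j) := by
      convert card_goodsets Z w using 2
      congr!
      rfl
    rw [hg]
    ring
  refine ⟨hcount, ?_⟩
  -- the probability identity
  have hwsum : (∑ σ ∈ Finset.univ.filter
      (fun σ : Equiv.Perm (Fin (n + m)) => ∀ j, catCount n m J Z σ j = w j),
      permWeight n m J Z r σ)
      = ((Finset.univ.filter
          (fun σ : Equiv.Perm (Fin (n + m)) => ∀ j, catCount n m J Z σ j = w j)).card : ℝ)
        * ∏ j, r j ^ (w j) := by
    have : ∀ σ ∈ Finset.univ.filter
        (fun σ : Equiv.Perm (Fin (n + m)) => ∀ j, catCount n m J Z σ j = w j),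
        permWeight n m J Z r σ = ∏ j, r j ^ (w j) := by
      intro σ hσ
      rw [Finset.mem_filter] at hσ
      rw [permWeight_eq]
      exact Finset.prod_congr rfl fun j _ => by rw [hσ.2 j]
    rw [Finset.sum_congr rfl this, Finset.sum_const, nsmul_eq_mul]
  rw [hwsum, hcount]
  rw [Finset.prod_mul_distrib]
  push_cast
  field_simp
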